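/- Let q > 0, N > 0 with Nq = √2, d = 2, φ the Hann window of width q, and ψ(x₁,x₂) = [(2πN)² − 8π²/q²](φ*φ)(x₁)(φ*φ)(x₂) + (π²/q²)[((q/(2π))sin(2π|x₁|/q) + q − |x₁|)(φ*φ)(x₂) + ((q/(2π))sin(2π|x₂|/q) + q − |x₂|)(φ*φ)(x₁)]. Then ψ(0,0) = 3π²/4, and for ‖x‖_∞ ≤ q/2 one has ψ(0) − ψ(x) ≥ (5/4)(π²/q²)‖x‖_∞². -/

import Mathlib

open MeasureTheory Real

/-- The Hann window of width `q`. -/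
noncomputable def hann (q x : ℝ) : ℝ := if |x| < q / 2 then Real.cos (Real.pi * x / q) ^ 2 else 0

/-- Autoconvolution of the Hann window over `ℝ`. -/
noncomputable def hconv (q x : ℝ) : ℝ := ∫ y : ℝ, hann q y * hann q (x - y)

/-- The bivariate localising function `ψ` in its explicit representation. -/
noncomputable def psi2 (q N x₁ x₂ : ℝ) : ℝ :=
  ((2 * π * N) ^ 2 - 8 * π ^ 2 / q ^ 2) * hconv q x₁ * hconv q x₂
    + (π ^ 2 / q ^ 2) *
      ((q / (2 * π) * Real.sin (2 * π * |x₁| / q) + q - |x₁|) * hconv q x₂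
        + (q / (2 * π) * Real.sin (2 * π * |x₂| / q) + q - |x₂|) * hconv q x₁)

set_option maxHeartbeats 1000000 in
lemma key_ineq (t : ℝ) (h0 : 0 ≤ t) (h1 : t ≤ π/2) :
    (π - t) * (2 + Real.cos (2*t)) / 8 + 3 * Real.sin (2*t) / 16 ≤ 3*π/8 - 5*t^2/(4*π) := by
  have hπ1 : (3.1415:ℝ) < π := by linarith [Real.pi_gt_d6]
  have hπ2 : π < 3.15 := by linarith [Real.pi_lt_d2]
  have hπ0 : (0:ℝ) < π := Real.pi_pos
  have h2pi : (0.2015:ℝ) ≤ 2/π^2 := by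
    rw [le_div_iff₀ (by positivity)]; nlinarith
  rcases le_or_gt t (4/5) with hA | hB
  · -- case A : 0 ≤ t ≤ 0.8
    have hst : Real.sin t ≤ t := Real.sin_le h0
    have hsc : t - t^3/4 ≤ Real.sin t := by
      rcases eq_or_lt_of_le h0 with h | h
      · simp [← h]
      · nlinarith [Real.sin_gt_sub_cube h, pow_pos h 3]
    have hu0 : 0 ≤ t - t^3/4 := by
      nlinarith [mul_le_mul_of_nonneg_left hA (mul_nonneg h0 h0),
        mul_le_mul_of_nonneg_left hA h0]
    have hc0 : 0 ≤ Real.cos t := Real.cos_nonneg_of_mem_Icc ⟨by linarith, by linarith⟩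
    have hcu : Real.cos t ≤ 1 - 2/π^2 * t^2 :=
      Real.cos_le_one_sub_mul_cos_sq (by rw [abs_of_nonneg h0]; linarith)
    have hcu' : Real.cos t ≤ 1 - 0.2015 * t^2 := by nlinarith [sq_nonneg t]
    have hsin2 : Real.sin (2*t) ≤ 2*t - 0.403*t^3 := by
      rw [Real.sin_two_mul]
      nlinarith [mul_le_mul_of_nonneg_right hst hc0, mul_le_mul_of_nonneg_left hcu' h0]
    have hcos2 : Real.cos (2*t) ≤ 1 - 2*(t - t^3/4)^2 := by
      have e : Real.cos (2*t) = 1 - 2*Real.sin t^2 := by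
        rw [Real.cos_two_mul']; linear_combination (Real.sin_sq_add_cos_sq t)
      rw [e]
      nlinarith [pow_le_pow_left₀ hu0 hsc 2]
    have e1 : (π - t)*(2 + Real.cos (2*t)) ≤ (π - t)*(2 + (1 - 2*(t - t^3/4)^2)) :=
      mul_le_mul_of_nonneg_left (by linarith) (by linarith)
    have h1' : (0.7056:ℝ) ≤ (1 - t^2/4)^2 := by nlinarith
    have h2 : (2.3415:ℝ) ≤ π - t := by linarith
    have h3 : (2.3415*0.7056:ℝ) ≤ (π - t)*(1 - t^2/4)^2 :=
      mul_le_mul h2 h1' (by norm_num) (by linarith)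
    have h4 := mul_le_mul_of_nonneg_left h3 (by positivity : (0:ℝ) ≤ 2*π)
    have hG : 0 ≤ 2*π*((π - t)*(1 - t^2/4)^2) - 10 + 0.6045*π*t := by
      have h5 : 0 ≤ 0.6045*π*t := by positivity
      nlinarith [h4]
    have key : 0 ≤ 2*π*(π - t)*(t - t^3/4)^2 - 10*t^2 + 0.6045*π*t^3 := by
      have e : 2*π*(π - t)*(t - t^3/4)^2 - 10*t^2 + 0.6045*π*t^3
          = t^2 * (2*π*((π - t)*(1 - t^2/4)^2) - 10 + 0.6045*π*t) := by ring
      rw [e]; exact mul_nonneg (sq_nonneg t) hG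
    have expand : 3*π/8 - 5*t^2/(4*π)
        - ((π - t)*(2 + (1 - 2*(t - t^3/4)^2))/8 + 3*(2*t - 0.403*t^3)/16)
        = (2*π*(π - t)*(t - t^3/4)^2 - 10*t^2 + 0.6045*π*t^3)/(8*π) := by
      field_simp; ring
    have hd : 0 ≤ (2*π*(π - t)*(t - t^3/4)^2 - 10*t^2 + 0.6045*π*t^3)/(8*π) :=
      div_nonneg key (by positivity)
    linarith [e1, hsin2, hd, expand]
  · -- case B : 0.8 < t ≤ π/2
    obtain ⟨s, hs0, hts⟩ : ∃ s, 0 ≤ s ∧ t = π/2 - s := ⟨π/2 - t, by linarith, by ring⟩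
    subst hts
    have hs1 : s < 0.775 := by linarith
    rw [show 2*(π/2 - s) = π - 2*s by ring, Real.cos_pi_sub, Real.sin_pi_sub]
    have hcl : 1 - s^2/2 ≤ Real.cos s := Real.one_sub_sq_div_two_le_cos
    have hcl0 : (0:ℝ) ≤ 1 - s^2/2 := by nlinarith
    have hcos2s : 2*(1 - s^2/2)^2 - 1 ≤ Real.cos (2*s) := by
      rw [Real.cos_two_mul]
      nlinarith [pow_le_pow_left₀ hcl0 hcl 2]
    have hsts : Real.sin s ≤ s := Real.sin_le hs0
    have hcs0 : 0 ≤ Real.cos s := Real.cos_nonneg_of_mem_Icc ⟨by linarith, by linarith⟩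
    have hcus : Real.cos s ≤ 1 - 2/π^2 * s^2 :=
      Real.cos_le_one_sub_mul_cos_sq (by rw [abs_of_nonneg hs0]; linarith)
    have hcus' : Real.cos s ≤ 1 - 0.2015 * s^2 := by nlinarith [sq_nonneg s]
    have hsin2s : Real.sin (2*s) ≤ 2*s - 0.403*s^3 := by
      rw [Real.sin_two_mul]
      nlinarith [mul_le_mul_of_nonneg_right hsts hcs0, mul_le_mul_of_nonneg_left hcus' hs0]
    have e1 : (π - (π/2 - s))*(2 + -Real.cos (2*s))
        ≤ (π - (π/2 - s))*(2 + -(2*(1 - s^2/2)^2 - 1)) :=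
      mul_le_mul_of_nonneg_left (by linarith) (by linarith)
    have hH : 0 ≤ 6*π - (π^2 + 10)*s - 1.3955*π*s^2 + (π^2/4)*s^3 + (π/2)*s^4 := by
      nlinarith [mul_nonneg (mul_nonneg hs0 hs0) hs0, sq_nonneg s,
        mul_nonneg (mul_nonneg (mul_nonneg hs0 hs0) hs0) hs0,
        mul_nonneg (mul_nonneg hs0 hs0) (sq_nonneg π),
        mul_le_mul_of_nonneg_left hπ2.le hs0, sq_nonneg (π - 3.1415), sq_nonneg (π*s),
        mul_nonneg hs0 (sq_nonneg π)]
    have key : 0 ≤ s * (6*π - (π^2 + 10)*s - 1.3955*π*s^2 + (π^2/4)*s^3 + (π/2)*s^4) :=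
      mul_nonneg hs0 hH
    have expand : 3*π/8 - 5*(π/2 - s)^2/(4*π)
        - ((π - (π/2 - s))*(2 + -(2*(1 - s^2/2)^2 - 1))/8 + 3*(2*s - 0.403*s^3)/16)
        = s * (6*π - (π^2 + 10)*s - 1.3955*π*s^2 + (π^2/4)*s^3 + (π/2)*s^4)/(8*π) := by
      field_simp; ring
    have hd : 0 ≤ s * (6*π - (π^2 + 10)*s - 1.3955*π*s^2 + (π^2/4)*s^3 + (π/2)*s^4)/(8*π) :=
      div_nonneg key (by positivity)
    linarith [e1, hsin2s, hd, expand]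

lemma hann_nonneg (q x : ℝ) : 0 ≤ hann q x := by
  unfold hann; split <;> positivity

lemma hconv_nonneg (q x : ℝ) : 0 ≤ hconv q x :=
  integral_nonneg fun y => mul_nonneg (hann_nonneg q y) (hann_nonneg q _)

lemma hann_neg (q x : ℝ) : hann q (-x) = hann q x := by
  unfold hann
  rw [abs_neg, show π * -x / q = -(π * x / q) by ring, Real.cos_neg]

lemma hconv_neg (q x : ℝ) : hconv q (-x) = hconv q x := by
  unfold hconv
  rw [← MeasureTheory.integral_neg_eq_self (fun y => hann q y * hann q (-x - y)) volume]
  congr 1; funext y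
  rw [hann_neg, show -x - -y = -(x - y) by ring, hann_neg]

lemma hconv_eq (q : ℝ) (hq : 0 < q) (x : ℝ) (hx0 : 0 ≤ x) (hx : x ≤ q/2) :
    hconv q x = (q - x) * (2 + Real.cos (2*π*x/q)) / 8 + 3*q/(16*π) * Real.sin (2*π*x/q) := by
  have hπ0 : (0:ℝ) < π := Real.pi_pos
  have hq0 : q ≠ 0 := hq.ne'
  have hπn : π ≠ 0 := hπ0.ne'
  have step1 : hconv q x
      = ∫ y in Set.Ioo (x - q/2) (q/2), Real.cos (π*y/q)^2 * Real.cos (π*(x-y)/q)^2 := by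
    unfold hconv
    rw [← MeasureTheory.integral_indicator measurableSet_Ioo]
    congr 1; funext y
    rw [Set.indicator_apply]
    by_cases hy : y ∈ Set.Ioo (x - q/2) (q/2)
    · obtain ⟨hy1, hy2⟩ := hy
      rw [if_pos (Set.mem_Ioo.2 ⟨hy1, hy2⟩)]
      unfold hann
      rw [if_pos (abs_lt.2 ⟨by linarith, hy2⟩), if_pos (abs_lt.2 ⟨by linarith, by linarith⟩)]
    · rw [if_neg hy]
      simp only [Set.mem_Ioo, not_and_or, not_lt] at hy
      unfold hann
      rcases hy with h | h
      · rw [if_neg (fun hc => by have := (abs_lt.1 hc).2; linarith) (c := |x - y| < q/2)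
            (t := Real.cos (π*(x-y)/q)^2) (e := 0), mul_zero]
      · rw [if_neg (fun hc => by have := (abs_lt.1 hc).2; linarith) (c := |y| < q/2)
            (t := Real.cos (π*y/q)^2) (e := 0), zero_mul]
  rw [step1]
  have hle : x - q/2 ≤ q/2 := by linarith
  rw [← MeasureTheory.integral_Ioc_eq_integral_Ioo, ← intervalIntegral.integral_of_le hle]
  have hFTC := intervalIntegral.integral_eq_sub_of_hasDerivAt
    (f := fun y => y/4 + (q/(8*π)) * Real.sin (2*π*y/q) - (q/(8*π)) * Real.sin (2*π*(x-y)/q)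
      + (q/(32*π)) * Real.sin (2*π*(2*y-x)/q) + y * Real.cos (2*π*x/q)/8)
    (f' := fun y => Real.cos (π*y/q)^2 * Real.cos (π*(x-y)/q)^2)
    (a := x - q/2) (b := q/2)
    (fun y _ => by
      have hy1 : HasDerivAt (fun y:ℝ => 2*π*y/q) (2*π/q) y := by
        simpa using ((hasDerivAt_id y).const_mul (2*π)).div_const q
      have hy2 : HasDerivAt (fun y:ℝ => 2*π*(x-y)/q) (-(2*π)/q) y := by
        simpa using (((hasDerivAt_id y).const_sub x).const_mul (2*π)).div_const q
      have hy3 : HasDerivAt (fun y:ℝ => 2*π*(2*y-x)/q) (2*π*2/q) y := by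
        simpa using ((((hasDerivAt_id y).const_mul (2:ℝ)).sub_const x).const_mul (2*π)).div_const q
      have hs1 := ((Real.hasDerivAt_sin (2*π*y/q)).comp y hy1).const_mul (q/(8*π))
      have hs2 := ((Real.hasDerivAt_sin (2*π*(x-y)/q)).comp y hy2).const_mul (q/(8*π))
      have hs3 := ((Real.hasDerivAt_sin (2*π*(2*y-x)/q)).comp y hy3).const_mul (q/(32*π))
      have hid : HasDerivAt (fun y:ℝ => y/4) (1/4) y := by
        simpa using (hasDerivAt_id y).div_const 4
      have hlin : HasDerivAt (fun y:ℝ => y * Real.cos (2*π*x/q)/8) (Real.cos (2*π*x/q)/8) y := by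
        simpa using ((hasDerivAt_id y).mul_const (Real.cos (2*π*x/q))).div_const 8
      have H := ((((hid.add hs1).sub hs2).add hs3).add hlin)
      convert H using 1
      · rfl
      have e1 : 2*π*y/q = 2*(π*y/q) := by ring
      have e2 : 2*π*(x-y)/q = 2*(π*(x-y)/q) := by ring
      have e3 : 2*π*(2*y-x)/q = 2*(π*y/q) - 2*(π*(x-y)/q) := by ring
      have e4 : 2*π*x/q = 2*(π*y/q) + 2*(π*(x-y)/q) := by ring
      rw [e1, e2, e3, e4, Real.cos_sub, Real.cos_add, Real.cos_two_mul, Real.cos_two_mul]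
      field_simp
      ring)
    (by
      apply Continuous.intervalIntegrable
      fun_prop)
  rw [hFTC]
  rw [show 2*π*(q/2)/q = π from by field_simp,
      show 2*π*(x-q/2)/q = 2*π*x/q - π from by field_simp,
      show 2*π*(2*(q/2)-x)/q = 2*π - 2*π*x/q from by field_simp,
      show 2*π*(x-(x-q/2))/q = π from by field_simp; ring,
      show 2*π*(2*(x-q/2)-x)/q = 2*π*x/q - 2*π from by field_simp; ring,
      Real.sin_pi, Real.sin_sub_pi, Real.sin_two_pi_sub, Real.sin_sub_two_pi]
  field_simp
  ring

lemma hconv_zero (q : ℝ) (hq : 0 < q) : hconv q 0 = 3*q/8 := by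
  rw [hconv_eq q hq 0 le_rfl (by linarith)]
  simp
  ring

lemma hconv_le (q : ℝ) (hq : 0 < q) (x : ℝ) (hx : |x| ≤ q/2) :
    hconv q x ≤ 3*q/8 - 5/4*x^2/q := by
  have hπ0 : (0:ℝ) < π := Real.pi_pos
  have habs : hconv q |x| = hconv q x := by
    rcases abs_cases x with ⟨h, _⟩ | ⟨h, _⟩
    · rw [h]
    · rw [h, hconv_neg]
  rw [← habs, ← sq_abs x]
  set u := |x| with hu
  have hu0 : 0 ≤ u := abs_nonneg x
  rw [hconv_eq q hq u hu0 hx]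
  have ht1 : π*u/q ≤ π/2 := by
    rw [div_le_div_iff₀ hq (by norm_num : (0:ℝ) < 2)]
    nlinarith
  have hk := key_ineq (π*u/q) (by positivity) ht1
  rw [show 2*(π*u/q) = 2*π*u/q from by ring] at hk
  have eL : (q - u) * (2 + Real.cos (2*π*u/q)) / 8 + 3*q/(16*π) * Real.sin (2*π*u/q)
      = (q/π) * ((π - π*u/q)*(2 + Real.cos (2*π*u/q))/8 + 3*Real.sin (2*π*u/q)/16) := by
    field_simp
  have eR : 3*q/8 - 5/4*u^2/q = (q/π) * (3*π/8 - 5*(π*u/q)^2/(4*π)) := by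
    field_simp
  rw [eL, eR]
  exact mul_le_mul_of_nonneg_left hk (by positivity)

set_option maxHeartbeats 2000000 in
theorem psi2_value_and_decay (q N : ℝ) (hq : 0 < q) (hN : 0 < N)
    (h : N * q = Real.sqrt 2) :
    psi2 q N 0 0 = 3 * π ^ 2 / 4 ∧
    ∀ x₁ x₂ : ℝ, max |x₁| |x₂| ≤ q / 2 →
      psi2 q N 0 0 - psi2 q N x₁ x₂ ≥ 5 / 4 * (π ^ 2 / q ^ 2) * (max |x₁| |x₂|) ^ 2 := by
  have hπ0 : (0:ℝ) < π := Real.pi_pos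
  have hq0 : q ≠ 0 := hq.ne'
  have hπn : π ≠ 0 := hπ0.ne'
  have h2 : N^2 * q^2 = 2 := by
    have h' : (N*q)^2 = 2 := by rw [h]; exact Real.sq_sqrt (by norm_num)
    nlinarith [h']
  have hzero : (2 * π * N) ^ 2 - 8 * π ^ 2 / q ^ 2 = 0 := by
    field_simp
    linear_combination 4*π^2*h2
  have hg : ∀ x : ℝ, q / (2 * π) * Real.sin (2 * π * |x| / q) + q - |x| ≤ q := by
    intro x
    have hs : Real.sin (2 * π * |x| / q) ≤ 2 * π * |x| / q :=
      Real.sin_le (by positivity)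
    have hmul := mul_le_mul_of_nonneg_left hs (by positivity : (0:ℝ) ≤ q/(2*π))
    have heq : q/(2*π) * (2*π*|x|/q) = |x| := by field_simp
    linarith [hmul, heq.le, heq.ge]
  have hvalue : psi2 q N 0 0 = 3 * π ^ 2 / 4 := by
    unfold psi2
    rw [hzero, hconv_zero q hq]
    simp only [abs_zero, mul_zero, zero_mul, sub_zero, zero_div, Real.sin_zero]
    field_simp
    ring
  refine ⟨hvalue, fun x₁ x₂ hm => ?_⟩
  have h1 : |x₁| ≤ q/2 := le_trans (le_max_left _ _) hm
  have h2' : |x₂| ≤ q/2 := le_trans (le_max_right _ _) hm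
  have hb1 := hconv_le q hq x₁ h1
  have hb2 := hconv_le q hq x₂ h2'
  have hn1 := hconv_nonneg q x₁
  have hn2 := hconv_nonneg q x₂
  have hg1 := hg x₁
  have hg2 := hg x₂
  have hm2 : (max |x₁| |x₂|)^2 ≤ x₁^2 + x₂^2 := by
    rcases max_cases |x₁| |x₂| with ⟨he, _⟩ | ⟨he, _⟩ <;> rw [he, sq_abs] <;>
      nlinarith [sq_nonneg x₁, sq_nonneg x₂]
  have c1 : (q / (2 * π) * Real.sin (2 * π * |x₁| / q) + q - |x₁|) * hconv q x₂
      ≤ q * hconv q x₂ := mul_le_mul_of_nonneg_right hg1 hn2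
  have c2 : (q / (2 * π) * Real.sin (2 * π * |x₂| / q) + q - |x₂|) * hconv q x₁
      ≤ q * hconv q x₁ := mul_le_mul_of_nonneg_right hg2 hn1
  have c3 : q * hconv q x₂ ≤ q * (3*q/8 - 5/4*x₂^2/q) :=
    mul_le_mul_of_nonneg_left hb2 hq.le
  have c4 : q * hconv q x₁ ≤ q * (3*q/8 - 5/4*x₁^2/q) :=
    mul_le_mul_of_nonneg_left hb1 hq.le
  have e3 : q * (3*q/8 - 5/4*x₂^2/q) = 3*q^2/8 - 5/4*x₂^2 := by field_simp
  have e4 : q * (3*q/8 - 5/4*x₁^2/q) = 3*q^2/8 - 5/4*x₁^2 := by field_simp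
  have hsum : (q / (2 * π) * Real.sin (2 * π * |x₁| / q) + q - |x₁|) * hconv q x₂
      + (q / (2 * π) * Real.sin (2 * π * |x₂| / q) + q - |x₂|) * hconv q x₁
      ≤ 3*q^2/4 - 5/4*(x₁^2 + x₂^2) := by linarith
  have hpsi : psi2 q N x₁ x₂ = (π ^ 2 / q ^ 2) *
      ((q / (2 * π) * Real.sin (2 * π * |x₁| / q) + q - |x₁|) * hconv q x₂
        + (q / (2 * π) * Real.sin (2 * π * |x₂| / q) + q - |x₂|) * hconv q x₁) := by
    unfold psi2
    rw [hzero]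
    ring
  have hpos : (0:ℝ) ≤ π^2/q^2 := by positivity
  have hkey := mul_le_mul_of_nonneg_left
    (show 5/4*(max |x₁| |x₂|)^2 ≤ 3*q^2/4
        - ((q / (2 * π) * Real.sin (2 * π * |x₁| / q) + q - |x₁|) * hconv q x₂
        + (q / (2 * π) * Real.sin (2 * π * |x₂| / q) + q - |x₂|) * hconv q x₁)
      from by linarith) hpos
  have hval2 : 3 * π ^ 2 / 4 = (π^2/q^2) * (3*q^2/4) := by field_simp
  rw [ge_iff_le, hvalue, hpsi, hval2]
  nlinarith [hkey]
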